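/- Let d ≥ 1, let Λ : M_d(ℂ) → M_d(ℂ) be a bijective CPTP linear map, and let V : M_d(ℂ) → M_d(ℂ) be a linear map. Suppose there exist states ρ₁, ρ₂ on ℂ^d ⊗ ℂ^d and p with 0 < p < 1 such that the Helstrom matrix Δ_p = p·ρ₁ − (1−p)·ρ₂ satisfies ‖(I_d ⊗ V)(Δ_p)‖₁ > ‖Δ_p‖₁. Then there exist states ρ₁', ρ₂' on ℂ^d ⊗ ℂ^d, both lying in the image of the set of states under I_d ⊗ Λ, and y with 0 < y < 1, such that Δ'_y = y·ρ₁' − (1−y)·ρ₂' satisfies ‖(I_d ⊗ V)(Δ'_y)‖₁ > ‖Δ'_y‖₁. -/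

import Mathlib

open Matrix Kronecker
open scoped ComplexOrder

/-- The trace norm of a complex matrix: the trace of the positive semidefinite
square root of `Aᴴ * A`. -/
noncomputable def traceNorm {n : Type*} [Fintype n] [DecidableEq n]
    (A : Matrix n n ℂ) : ℝ :=
  (((Matrix.posSemidef_conjTranspose_mul_self A).1.eigenvectorUnitary.1 *
      diagonal ((fun x : ℝ => (x : ℂ)) ∘ (fun x : ℝ => √x) ∘ (Matrix.posSemidef_conjTranspose_mul_self A).1.eigenvalues) *
      (star (Matrix.posSemidef_conjTranspose_mul_self A).1.eigenvectorUnitary :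
        Matrix n n ℂ)).trace).re

/-- A state: a positive semidefinite matrix of trace one. -/
def IsState {n : Type*} [Fintype n] [DecidableEq n] (ρ : Matrix n n ℂ) : Prop :=
  ρ.PosSemidef ∧ ρ.trace = 1

/-- A trace-preserving linear map on matrices. -/
def TracePreserving {d : ℕ} (Φ : Matrix (Fin d) (Fin d) ℂ →ₗ[ℂ] Matrix (Fin d) (Fin d) ℂ) : Prop :=
  ∀ A, (Φ A).trace = A.trace

/-- A Hermiticity-preserving linear map on matrices. -/
def HermPreserving {d : ℕ} (Φ : Matrix (Fin d) (Fin d) ℂ →ₗ[ℂ] Matrix (Fin d) (Fin d) ℂ) : Prop :=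
  ∀ A, Φ Aᴴ = (Φ A)ᴴ

/-- The ampliation `I_n ⊗ Φ` of a linear map `Φ` on `d × d` matrices, acting blockwise
on `n × n` block matrices with `d × d` blocks. -/
def ampliation {n d : ℕ} (Φ : Matrix (Fin d) (Fin d) ℂ →ₗ[ℂ] Matrix (Fin d) (Fin d) ℂ)
    (A : Matrix (Fin n × Fin d) (Fin n × Fin d) ℂ) :
    Matrix (Fin n × Fin d) (Fin n × Fin d) ℂ :=
  Matrix.of fun p q => Φ (Matrix.of fun i j => A (p.1, i) (q.1, j)) p.2 q.2

/-- A positive map: maps positive semidefinite matrices to positive semidefinite matrices. -/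
def PositiveMap {d : ℕ} (Φ : Matrix (Fin d) (Fin d) ℂ →ₗ[ℂ] Matrix (Fin d) (Fin d) ℂ) : Prop :=
  ∀ A, A.PosSemidef → (Φ A).PosSemidef

/-- A completely positive map: every ampliation `I_n ⊗ Φ` is a positive map. -/
def CompletelyPositive {d : ℕ}
    (Φ : Matrix (Fin d) (Fin d) ℂ →ₗ[ℂ] Matrix (Fin d) (Fin d) ℂ) : Prop :=
  ∀ n : ℕ, 1 ≤ n → ∀ A : Matrix (Fin n × Fin d) (Fin n × Fin d) ℂ,
    A.PosSemidef → (ampliation Φ A).PosSemidef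

/-- A separable state on `ℂ^m ⊗ ℂ^d`: a finite convex combination of product states. -/
def SeparableState {m d : ℕ} (ρ : Matrix (Fin m × Fin d) (Fin m × Fin d) ℂ) : Prop :=
  ∃ (k : ℕ) (w : Fin k → ℝ) (σ : Fin k → Matrix (Fin m) (Fin m) ℂ)
    (τ : Fin k → Matrix (Fin d) (Fin d) ℂ),
    (∀ i, 0 ≤ w i) ∧ (∑ i, w i) = 1 ∧ (∀ i, IsState (σ i)) ∧ (∀ i, IsState (τ i)) ∧
    ρ = ∑ i, (w i : ℂ) • (σ i ⊗ₖ τ i)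

lemma psd_smul_real {m : Type*} [Fintype m] {M : Matrix m m ℂ} (hM : M.PosSemidef)
    {s : ℝ} (hs : 0 ≤ s) : ((s : ℂ) • M).PosSemidef := by
  constructor
  · have : (star (s:ℂ)) = (s:ℂ) := by simp
    rw [Matrix.IsHermitian, conjTranspose_smul, this, hM.1.eq]
  · intro x
    exact (hM.smul (Complex.zero_le_real.mpr hs)).2 x

lemma one_add_smul_posSemidef {m : Type*} [Fintype m] [DecidableEq m]
    {X : Matrix m m ℂ} (hX : X.IsHermitian) :
    ∃ ε : ℝ, 0 < ε ∧ ∀ s : ℝ, |s| ≤ ε → ((1 : Matrix m m ℂ) + (s : ℂ) • X).PosSemidef := by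
  set U : Matrix m m ℂ := (hX.eigenvectorUnitary : Matrix m m ℂ) with hUdef
  set lam := hX.eigenvalues with hlamdef
  refine ⟨(1 + ∑ i, |lam i|)⁻¹, by positivity, fun s hs => ?_⟩
  have hU : U * star U = 1 := mem_unitaryGroup_iff.mp hX.eigenvectorUnitary.2
  have hdiag : (diagonal (fun i => ((1 + s * lam i : ℝ) : ℂ)) : Matrix m m ℂ)
      = 1 + (s : ℂ) • diagonal (RCLike.ofReal ∘ lam) := by
    ext i j
    by_cases h : i = j <;>
      simp [h, diagonal, Matrix.one_apply, Matrix.smul_apply, RCLike.ofReal]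
  have key : U * ((1 : Matrix m m ℂ) + (s : ℂ) • diagonal (RCLike.ofReal ∘ lam)) * star U
      = 1 + (s : ℂ) • X := by
    rw [Matrix.mul_add, Matrix.add_mul, Matrix.mul_one, hU, Matrix.mul_smul, Matrix.smul_mul]
    congr 1
    conv_rhs => rw [hX.spectral_theorem]
    rfl
  have hnn : ∀ i, (0 : ℂ) ≤ ((1 + s * lam i : ℝ) : ℂ) := by
    intro i
    refine Complex.zero_le_real.mpr ?_
    have hsum : |lam i| ≤ ∑ j, |lam j| :=
      Finset.single_le_sum (fun j _ => abs_nonneg (lam j)) (Finset.mem_univ i)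
    have hpos : (0:ℝ) < 1 + ∑ j, |lam j| := by positivity
    have h1 : |s * lam i| ≤ 1 := by
      rw [abs_mul]
      calc |s| * |lam i| ≤ (1 + ∑ j, |lam j|)⁻¹ * (1 + ∑ j, |lam j|) := by
            apply mul_le_mul hs (by linarith) (abs_nonneg _) (by positivity)
        _ = 1 := inv_mul_cancel₀ hpos.ne'
    have := (abs_le.mp h1).1
    linarith
  have hd : PosSemidef (diagonal (fun i => ((1 + s * lam i : ℝ) : ℂ)) : Matrix m m ℂ) :=
    PosSemidef.diagonal hnn
  have := hd.mul_mul_conjTranspose_same U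
  rw [← Matrix.star_eq_conjTranspose, hdiag, key] at this
  exact this

lemma hermPreserving_of_positive {m : Type*} [Fintype m] [DecidableEq m]
    (F : Matrix m m ℂ →ₗ[ℂ] Matrix m m ℂ)
    (hF : ∀ A, A.PosSemidef → (F A).PosSemidef) :
    ∀ A, F Aᴴ = (F A)ᴴ := by
  have herm : ∀ H : Matrix m m ℂ, H.IsHermitian → (F H).IsHermitian := by
    intro H hH
    obtain ⟨ε, hε, h⟩ := one_add_smul_posSemidef hH
    have hP := hF _ (h ε (by rw [abs_of_pos hε]))
    have hQ := hF _ (h (-ε) (by rw [abs_neg, abs_of_pos hε]))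
    have hsub : (1 + (ε:ℂ) • H) - (1 + ((-ε : ℝ):ℂ) • H) = ((2*ε : ℝ):ℂ) • H := by
      push_cast
      module
    have hHrw : H = (((2*ε)⁻¹ : ℝ) : ℂ) • ((1 + (ε:ℂ) • H) - (1 + ((-ε : ℝ):ℂ) • H)) := by
      rw [hsub, smul_smul, ← Complex.ofReal_mul,
        inv_mul_cancel₀ (by positivity : (2*ε:ℝ) ≠ 0), Complex.ofReal_one, one_smul]
    rw [hHrw, _root_.map_smul, map_sub]
    have hstar : star ((((2*ε)⁻¹ : ℝ) : ℂ)) = (((2*ε)⁻¹ : ℝ) : ℂ) := by simp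
    rw [Matrix.IsHermitian, conjTranspose_smul, hstar, conjTranspose_sub, hP.1.eq, hQ.1.eq]
  intro A
  have hII : Complex.I * (-Complex.I / 2) = 1/2 := by
    rw [← mul_div_assoc, mul_neg, Complex.I_mul_I, neg_neg]
  obtain ⟨H, hHdef⟩ : ∃ H : Matrix m m ℂ, H = ((1:ℂ)/2) • (A + Aᴴ) := ⟨_, rfl⟩
  obtain ⟨K, hKdef⟩ : ∃ K : Matrix m m ℂ, K = (-Complex.I/2) • (A - Aᴴ) := ⟨_, rfl⟩
  have hH : H.IsHermitian := by
    rw [Matrix.IsHermitian, hHdef, conjTranspose_smul, conjTranspose_add,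
      conjTranspose_conjTranspose]
    simp
    module
  have hK : K.IsHermitian := by
    rw [Matrix.IsHermitian, hKdef, conjTranspose_smul, conjTranspose_sub,
      conjTranspose_conjTranspose]
    simp [Complex.conj_I]
    module
  have hA1 : A = H + Complex.I • K := by
    rw [hHdef, hKdef, smul_smul, hII]
    module
  have hA2 : Aᴴ = H - Complex.I • K := by
    rw [hHdef, hKdef, smul_smul, hII]
    module
  calc F Aᴴ = F H - Complex.I • F K := by rw [hA2, map_sub, _root_.map_smul]
  _ = (F H + Complex.I • F K)ᴴ := by
      rw [conjTranspose_add, conjTranspose_smul, (herm H hH).eq, (herm K hK).eq,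
        Complex.star_def, Complex.conj_I, neg_smul, sub_eq_add_neg]
  _ = (F A)ᴴ := by rw [← _root_.map_smul, ← map_add, ← hA1]

private def blk {n d : ℕ} (A : Matrix (Fin n × Fin d) (Fin n × Fin d) ℂ) (i j : Fin n) :
    Matrix (Fin d) (Fin d) ℂ := Matrix.of fun a b => A (i, a) (j, b)

lemma ampliation_apply {n d : ℕ} (Φ : Matrix (Fin d) (Fin d) ℂ →ₗ[ℂ] Matrix (Fin d) (Fin d) ℂ)
    (A : Matrix (Fin n × Fin d) (Fin n × Fin d) ℂ) (p q : Fin n × Fin d) :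
    ampliation Φ A p q = Φ (blk A p.1 q.1) p.2 q.2 := rfl

lemma blk_add {n d : ℕ} (A B : Matrix (Fin n × Fin d) (Fin n × Fin d) ℂ) (i j : Fin n) :
    blk (A + B) i j = blk A i j + blk B i j := rfl

lemma blk_smul {n d : ℕ} (c : ℂ) (A : Matrix (Fin n × Fin d) (Fin n × Fin d) ℂ) (i j : Fin n) :
    blk (c • A) i j = c • blk A i j := rfl

lemma ampliation_add {n d : ℕ} (Φ : Matrix (Fin d) (Fin d) ℂ →ₗ[ℂ] Matrix (Fin d) (Fin d) ℂ)
    (A B : Matrix (Fin n × Fin d) (Fin n × Fin d) ℂ) :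
    ampliation Φ (A + B) = ampliation Φ A + ampliation Φ B := by
  ext p q
  rw [Matrix.add_apply, ampliation_apply, ampliation_apply, ampliation_apply, blk_add, map_add]
  rfl

lemma ampliation_smul {n d : ℕ} (Φ : Matrix (Fin d) (Fin d) ℂ →ₗ[ℂ] Matrix (Fin d) (Fin d) ℂ)
    (c : ℂ) (A : Matrix (Fin n × Fin d) (Fin n × Fin d) ℂ) :
    ampliation Φ (c • A) = c • ampliation Φ A := by
  ext p q
  rw [Matrix.smul_apply, ampliation_apply, ampliation_apply, blk_smul, _root_.map_smul]
  rfl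

/-- `ampliation` as a linear map. -/
def ampliationL {n d : ℕ} (Φ : Matrix (Fin d) (Fin d) ℂ →ₗ[ℂ] Matrix (Fin d) (Fin d) ℂ) :
    Matrix (Fin n × Fin d) (Fin n × Fin d) ℂ →ₗ[ℂ] Matrix (Fin n × Fin d) (Fin n × Fin d) ℂ where
  toFun := ampliation Φ
  map_add' := ampliation_add Φ
  map_smul' := ampliation_smul Φ

lemma ampliation_comp {n d : ℕ} (Φ Ψ : Matrix (Fin d) (Fin d) ℂ →ₗ[ℂ] Matrix (Fin d) (Fin d) ℂ)
    (A : Matrix (Fin n × Fin d) (Fin n × Fin d) ℂ) :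
    ampliation Φ (ampliation Ψ A) = ampliation (Φ ∘ₗ Ψ) A := rfl

lemma ampliation_id {n d : ℕ} (A : Matrix (Fin n × Fin d) (Fin n × Fin d) ℂ) :
    ampliation (LinearMap.id) A = A := by
  ext ⟨i, a⟩ ⟨j, b⟩
  rfl

lemma ampliation_trace {n d : ℕ} (Φ : Matrix (Fin d) (Fin d) ℂ →ₗ[ℂ] Matrix (Fin d) (Fin d) ℂ)
    (hΦ : TracePreserving Φ) (A : Matrix (Fin n × Fin d) (Fin n × Fin d) ℂ) :
    (ampliation Φ A).trace = A.trace := by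
  have h1 : (ampliation Φ A).trace = ∑ i : Fin n, (Φ (blk A i i)).trace := by
    simp [Matrix.trace, Matrix.diag, ampliation_apply, Fintype.sum_prod_type]
  have h2 : A.trace = ∑ i : Fin n, (blk A i i).trace := by
    simp [Matrix.trace, Matrix.diag, blk, Fintype.sum_prod_type]
  rw [h1, h2]
  exact Finset.sum_congr rfl fun i _ => hΦ _

lemma traceNorm_smul_real {m : Type*} [Fintype m] [DecidableEq m] {s : ℝ} (hs : 0 ≤ s)
    (A : Matrix m m ℂ) : traceNorm ((s : ℂ) • A) = s * traceNorm A := by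
  have e : ∀ B : Matrix m m ℂ, traceNorm B = (cfc Real.sqrt (Bᴴ * B)).trace.re := fun B => by
    rw [(Matrix.posSemidef_conjTranspose_mul_self B).1.cfc_eq]
    rfl
  have hc : star (s : ℂ) * (s : ℂ) = ((s ^ 2 : ℝ) : ℂ) := by simp [sq]
  have hB : ((s : ℂ) • A)ᴴ * ((s : ℂ) • A) = (s ^ 2 : ℝ) • (Aᴴ * A) := by
    rw [conjTranspose_smul, Matrix.smul_mul, Matrix.mul_smul, smul_smul, hc, Complex.coe_smul]
  have hAh : IsSelfAdjoint (Aᴴ * A) := (Matrix.posSemidef_conjTranspose_mul_self A).1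
  have hf : (fun x : ℝ => Real.sqrt ((s ^ 2 : ℝ) • x)) = fun x => s * Real.sqrt x := by
    funext x
    rw [smul_eq_mul, Real.sqrt_mul (sq_nonneg s), Real.sqrt_sq hs]
  rw [e, e, hB, ← cfc_comp_smul (s ^ 2 : ℝ) Real.sqrt (Aᴴ * A), hf,
    cfc_const_mul s Real.sqrt (Aᴴ * A) Real.continuous_sqrt.continuousOn,
    Matrix.trace_smul, Complex.smul_re, smul_eq_mul]
/-- If some Helstrom matrix on `ℂ^d ⊗ ℂ^d` witnesses a trace-norm increase under
`I_d ⊗ V`, then such a witness can be built from states lying in the image of the set of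
states under `I_d ⊗ Λ`, for any bijective CPTP map `Λ`. -/
theorem helstrom_witness_in_image (d : ℕ) (hd : 1 ≤ d)
    (Λ : Matrix (Fin d) (Fin d) ℂ →ₗ[ℂ] Matrix (Fin d) (Fin d) ℂ)
    (hΛTP : TracePreserving Λ) (hΛCP : CompletelyPositive Λ)
    (hΛbij : Function.Bijective Λ)
    (V : Matrix (Fin d) (Fin d) ℂ →ₗ[ℂ] Matrix (Fin d) (Fin d) ℂ)
    (h : ∃ (ρ₁ ρ₂ : Matrix (Fin d × Fin d) (Fin d × Fin d) ℂ) (p : ℝ),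
      IsState ρ₁ ∧ IsState ρ₂ ∧ 0 < p ∧ p < 1 ∧
        traceNorm (ampliation V ((p : ℂ) • ρ₁ - ((1 - p : ℝ) : ℂ) • ρ₂)) >
          traceNorm ((p : ℂ) • ρ₁ - ((1 - p : ℝ) : ℂ) • ρ₂)) :
    ∃ (ρ₁' ρ₂' : Matrix (Fin d × Fin d) (Fin d × Fin d) ℂ) (y : ℝ),
      IsState ρ₁' ∧ IsState ρ₂' ∧
      (∃ ρ, IsState ρ ∧ ampliation Λ ρ = ρ₁') ∧
      (∃ ρ, IsState ρ ∧ ampliation Λ ρ = ρ₂') ∧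
      0 < y ∧ y < 1 ∧
        traceNorm (ampliation V ((y : ℂ) • ρ₁' - ((1 - y : ℝ) : ℂ) • ρ₂')) >
          traceNorm ((y : ℂ) • ρ₁' - ((1 - y : ℝ) : ℂ) • ρ₂') := by
  classical
  obtain ⟨ρ₁, ρ₂, p, h1, h2, hp0, hp1, hgt⟩ := h
  -- the inverse channel
  set E := LinearEquiv.ofBijective Λ hΛbij with hE
  set Λ' : Matrix (Fin d) (Fin d) ℂ →ₗ[ℂ] Matrix (Fin d) (Fin d) ℂ := E.symm.toLinearMap with hΛ'
  have hinv1 : ∀ A, Λ (Λ' A) = A := fun A => E.apply_symm_apply A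
  have hinv2 : ∀ A, Λ' (Λ A) = A := fun A => E.symm_apply_apply A
  have hΛ'TP : TracePreserving Λ' := by
    intro A
    have h := hΛTP (Λ' A)
    rw [hinv1] at h
    exact h.symm
  -- big-level maps
  have hFcomp : ∀ A : Matrix (Fin d × Fin d) (Fin d × Fin d) ℂ,
      ampliation Λ (ampliation Λ' A) = A := by
    intro A
    rw [ampliation_comp]
    have hid : Λ ∘ₗ Λ' = LinearMap.id := by ext B : 1; exact hinv1 B
    rw [hid, ampliation_id]
  have hFcomp' : ∀ A : Matrix (Fin d × Fin d) (Fin d × Fin d) ℂ,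
      ampliation Λ' (ampliation Λ A) = A := by
    intro A
    rw [ampliation_comp]
    have hid : Λ' ∘ₗ Λ = LinearMap.id := by ext B : 1; exact hinv2 B
    rw [hid, ampliation_id]
  have hFherm : ∀ A : Matrix (Fin d × Fin d) (Fin d × Fin d) ℂ,
      ampliation Λ Aᴴ = (ampliation Λ A)ᴴ :=
    hermPreserving_of_positive (ampliationL (n := d) Λ) (fun A hA => hΛCP d hd A hA)
  have hF'herm : ∀ A : Matrix (Fin d × Fin d) (Fin d × Fin d) ℂ,
      ampliation Λ' Aᴴ = (ampliation Λ' A)ᴴ := by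
    intro A
    calc ampliation Λ' Aᴴ
        = ampliation Λ' ((ampliation Λ (ampliation Λ' A))ᴴ) := by rw [hFcomp]
      _ = ampliation Λ' (ampliation Λ ((ampliation Λ' A)ᴴ)) := by rw [hFherm]
      _ = (ampliation Λ' A)ᴴ := hFcomp' _
  -- basic data
  obtain ⟨Δ, hΔdef⟩ : ∃ Δ : Matrix (Fin d × Fin d) (Fin d × Fin d) ℂ,
      Δ = (p : ℂ) • ρ₁ - ((1 - p : ℝ) : ℂ) • ρ₂ := ⟨_, rfl⟩
  rw [← hΔdef] at hgt
  obtain ⟨t, htdef⟩ : ∃ t : ℝ, t = 2 * p - 1 := ⟨_, rfl⟩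
  have hΔherm : Δ.IsHermitian := by
    rw [Matrix.IsHermitian, hΔdef, conjTranspose_sub, conjTranspose_smul, conjTranspose_smul,
      h1.1.1.eq, h2.1.1.eq]
    congr 1 <;> congr 1 <;> simp
  have hΔtrace : Δ.trace = (t : ℂ) := by
    rw [hΔdef, trace_sub, trace_smul, trace_smul, h1.2, h2.2, smul_eq_mul, smul_eq_mul,
      htdef]
    push_cast
    ring
  obtain ⟨κ, hκdef⟩ : ∃ κ : ℝ, κ = ((d * d : ℕ) : ℝ) := ⟨_, rfl⟩
  have hκpos : (0 : ℝ) < κ := by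
    rw [hκdef]
    have : 0 < d * d := Nat.mul_pos hd hd
    exact_mod_cast this
  obtain ⟨μ, hμdef⟩ : ∃ μ : Matrix (Fin d × Fin d) (Fin d × Fin d) ℂ,
      μ = ((κ⁻¹ : ℝ) : ℂ) • 1 := ⟨_, rfl⟩
  have hμpsd : μ.PosSemidef := by
    rw [hμdef]
    exact psd_smul_real Matrix.PosSemidef.one (inv_nonneg.mpr hκpos.le)
  have hμtrace : μ.trace = 1 := by
    rw [hμdef, trace_smul, trace_one, smul_eq_mul]
    have hcard : (Fintype.card (Fin d × Fin d) : ℂ) = ((κ : ℝ) : ℂ) := by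
      rw [hκdef]
      push_cast [Fintype.card_prod, Fintype.card_fin]
      ring
    rw [hcard, ← Complex.ofReal_mul, inv_mul_cancel₀ hκpos.ne']
    simp
  obtain ⟨X, hXdef⟩ : ∃ X : Matrix (Fin d × Fin d) (Fin d × Fin d) ℂ,
      X = ampliation Λ' Δ - ((t : ℝ) : ℂ) • μ := ⟨_, rfl⟩
  have hXherm : X.IsHermitian := by
    rw [Matrix.IsHermitian, hXdef, conjTranspose_sub, conjTranspose_smul, ← hF'herm,
      hΔherm.eq]
    congr 1
    rw [hμdef, conjTranspose_smul, conjTranspose_one]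
    congr 1 <;> simp
  have hXtrace : X.trace = 0 := by
    rw [hXdef, trace_sub, trace_smul, ampliation_trace Λ' hΛ'TP, hΔtrace, hμtrace,
      smul_eq_mul, mul_one, sub_self]
  obtain ⟨Y, hYdef⟩ : ∃ Y : Matrix (Fin d × Fin d) (Fin d × Fin d) ℂ,
      Y = ((κ : ℝ) : ℂ) • X := ⟨_, rfl⟩
  have hYherm : Y.IsHermitian := by
    rw [Matrix.IsHermitian, hYdef, conjTranspose_smul, hXherm.eq]
    congr 1
    simp
  obtain ⟨ε, hε, hpsd⟩ := one_add_smul_posSemidef hYherm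
  obtain ⟨s, hsdef⟩ : ∃ s : ℝ, s = min ε 2⁻¹ := ⟨_, rfl⟩
  have hs0 : 0 < s := hsdef ▸ lt_min hε (by norm_num)
  have hsε : s ≤ ε := hsdef ▸ min_le_left _ _
  have hs2 : s ≤ 2⁻¹ := hsdef ▸ min_le_right _ _
  have ht1 : |t| < 1 := by rw [htdef, abs_lt]; constructor <;> linarith
  have hst : |s * t| < 1 := by
    rw [abs_mul, abs_of_pos hs0]
    calc s * |t| ≤ 2⁻¹ * 1 := by
          apply mul_le_mul hs2 ht1.le (abs_nonneg _) (by norm_num)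
      _ < 1 := by norm_num
  obtain ⟨y, hydef⟩ : ∃ y : ℝ, y = (1 + s * t) / 2 := ⟨_, rfl⟩
  have hst1 := (abs_lt.mp hst).1
  have hst2 := (abs_lt.mp hst).2
  have hy0 : 0 < y := by rw [hydef]; linarith
  have hy1 : y < 1 := by rw [hydef]; linarith
  -- the pulled-back states
  obtain ⟨σ₁, hσ₁def⟩ : ∃ σ : Matrix (Fin d × Fin d) (Fin d × Fin d) ℂ,
      σ = μ + (s : ℂ) • X := ⟨_, rfl⟩
  obtain ⟨σ₂, hσ₂def⟩ : ∃ σ : Matrix (Fin d × Fin d) (Fin d × Fin d) ℂ,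
      σ = μ - (s : ℂ) • X := ⟨_, rfl⟩
  have hσrw : ∀ u : ℝ, μ + (u : ℂ) • X = ((κ⁻¹ : ℝ) : ℂ) • (1 + (u : ℂ) • Y) := by
    intro u
    have hκ0 : ((κ : ℝ) : ℂ) ≠ 0 := by exact_mod_cast hκpos.ne'
    have hκc : ((κ⁻¹ : ℝ) : ℂ) * (u : ℂ) * ((κ : ℝ) : ℂ) = (u : ℂ) := by
      push_cast
      field_simp
    rw [hμdef, hYdef, smul_add, smul_smul, smul_smul, hκc]
  have hσ₁psd : σ₁.PosSemidef := by
    rw [hσ₁def, hσrw s]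
    exact psd_smul_real (hpsd s (by rwa [abs_of_pos hs0])) (inv_nonneg.mpr hκpos.le)
  have hσ₂psd : σ₂.PosSemidef := by
    have h' : σ₂ = μ + ((-s : ℝ) : ℂ) • X := by
      rw [hσ₂def]
      push_cast
      module
    rw [h', hσrw (-s)]
    exact psd_smul_real (hpsd (-s) (by rwa [abs_neg, abs_of_pos hs0]))
      (inv_nonneg.mpr hκpos.le)
  have hσ₁trace : σ₁.trace = 1 := by
    rw [hσ₁def, trace_add, trace_smul, hXtrace, hμtrace]
    simp
  have hσ₂trace : σ₂.trace = 1 := by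
    rw [hσ₂def, trace_sub, trace_smul, hXtrace, hμtrace]
    simp
  have hσ₁state : IsState σ₁ := ⟨hσ₁psd, hσ₁trace⟩
  have hσ₂state : IsState σ₂ := ⟨hσ₂psd, hσ₂trace⟩
  -- the image states
  refine ⟨ampliation Λ σ₁, ampliation Λ σ₂, y,
    ⟨hΛCP d hd σ₁ hσ₁psd, by rw [ampliation_trace Λ hΛTP, hσ₁trace]⟩,
    ⟨hΛCP d hd σ₂ hσ₂psd, by rw [ampliation_trace Λ hΛTP, hσ₂trace]⟩,
    ⟨σ₁, hσ₁state, rfl⟩, ⟨σ₂, hσ₂state, rfl⟩, hy0, hy1, ?_⟩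
  -- the Helstrom matrix identity
  obtain ⟨W, hWdef⟩ : ∃ W : Matrix (Fin d × Fin d) (Fin d × Fin d) ℂ,
      W = ampliation Λ μ := ⟨_, rfl⟩
  have hFX : ampliation Λ X = Δ - ((t : ℝ) : ℂ) • W := by
    calc ampliation Λ X
        = ampliation Λ (ampliation Λ' Δ) - ampliation Λ (((t : ℝ) : ℂ) • μ) := by
          rw [hXdef]
          exact map_sub (ampliationL (n := d) Λ) _ _
      _ = Δ - ((t : ℝ) : ℂ) • W := by rw [hFcomp, ampliation_smul, hWdef]
  have hρ1 : ampliation Λ σ₁ = W + (s : ℂ) • (Δ - ((t : ℝ) : ℂ) • W) := by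
    rw [hσ₁def, ampliation_add, ampliation_smul, hFX, hWdef]
  have hρ2 : ampliation Λ σ₂ = W - (s : ℂ) • (Δ - ((t : ℝ) : ℂ) • W) := by
    have h' : μ - (s : ℂ) • X = μ + (-(s : ℂ)) • X := by module
    rw [hσ₂def, h', ampliation_add, ampliation_smul, hFX, hWdef]
    module
  have hyC : ((y : ℝ) : ℂ) = (1 + (s : ℂ) * (t : ℂ)) / 2 := by
    rw [hydef]; push_cast; ring
  have h1yC : ((1 - y : ℝ) : ℂ) = (1 - (s : ℂ) * (t : ℂ)) / 2 := by
    rw [hydef]; push_cast; ring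
  have hkey : (y : ℂ) • ampliation Λ σ₁ - ((1 - y : ℝ) : ℂ) • ampliation Λ σ₂
      = (s : ℂ) • Δ := by
    rw [hρ1, hρ2, hyC, h1yC]
    have hΔrw : Δ = (Δ - ((t : ℝ) : ℂ) • W) + ((t : ℝ) : ℂ) • W := by module
    conv_rhs => rw [hΔrw]
    match_scalars <;> ring
  rw [hkey, ampliation_smul V, traceNorm_smul_real hs0.le, traceNorm_smul_real hs0.le]
  exact (mul_lt_mul_iff_right₀ hs0).mpr hgt
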